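/- The equation (1 - r²)·cos r = 2r has a unique solution r₁ in (0, 1), and 0.39 < r₁ < 0.392. -/
import Mathlib

noncomputable def kfun (r : ℝ) : ℝ := (1 - r ^ 2) * Real.cos r - 2 * r

lemma kfun_anti : ∀ a ∈ Set.Icc (0:ℝ) 1, ∀ b ∈ Set.Icc (0:ℝ) 1, a < b → kfun b < kfun a := by
  rintro a ⟨ha0, ha1⟩ b ⟨hb0, hb1⟩ hab
  have hpi : (2:ℝ) < Real.pi := by linarith [Real.pi_gt_d6]
  have hca : 0 < Real.cos a := Real.cos_pos_of_mem_Ioo ⟨by linarith, by linarith⟩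
  have hcb : 0 ≤ Real.cos b := Real.cos_nonneg_of_mem_Icc ⟨by linarith, by linarith⟩
  have hle : Real.cos b ≤ Real.cos a :=
    Real.cos_le_cos_of_nonneg_of_le_pi ha0 (by linarith) hab.le
  unfold kfun
  nlinarith [mul_nonneg (sub_nonneg.2 (by nlinarith : b ^ 2 ≤ 1)) hcb,
    mul_le_mul_of_nonneg_left hle (sub_nonneg.2 (by nlinarith : b ^ 2 ≤ 1)),
    mul_lt_mul_of_pos_right (show (1:ℝ) - b ^ 2 < 1 - a ^ 2 by nlinarith) hca]

lemma kfun_cont : Continuous kfun := by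
  unfold kfun; continuity

lemma cos_lb (x : ℝ) (hx : |x| ≤ 1) : 1 - x ^ 2 / 2 - |x| ^ 4 * (5 / 96) ≤ Real.cos x := by
  have := Real.cos_bound hx
  rw [abs_le] at this
  linarith [this.2]

lemma cos_ub (x : ℝ) (hx : |x| ≤ 1) : Real.cos x ≤ 1 - x ^ 2 / 2 + |x| ^ 4 * (5 / 96) := by
  have := Real.cos_bound hx
  rw [abs_le] at this
  linarith [this.1]

lemma k39 : 0 < kfun 0.39 := by
  have h := cos_lb 0.39 (by rw [abs_of_nonneg] <;> norm_num)
  rw [abs_of_nonneg (by norm_num)] at h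
  unfold kfun
  nlinarith

lemma k392 : kfun 0.392 < 0 := by
  have h := cos_ub 0.392 (by rw [abs_of_nonneg] <;> norm_num)
  rw [abs_of_nonneg (by norm_num)] at h
  unfold kfun
  nlinarith

theorem stmt_5 :
    ∃ r₁ : ℝ, (r₁ ∈ Set.Ioo (0 : ℝ) 1 ∧ (1 - r₁ ^ 2) * Real.cos r₁ = 2 * r₁) ∧
      (∀ r ∈ Set.Ioo (0 : ℝ) 1, (1 - r ^ 2) * Real.cos r = 2 * r → r = r₁) ∧
      0.39 < r₁ ∧ r₁ < 0.392 := by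
  have hIVT : (0:ℝ) ∈ kfun '' Set.Ioo (0.39 : ℝ) 0.392 := by
    apply intermediate_value_Ioo' (by norm_num) kfun_cont.continuousOn
    exact ⟨k392, k39⟩
  obtain ⟨r₁, hr₁mem, hr₁⟩ := hIVT
  obtain ⟨h39, h392⟩ := hr₁mem
  have hr₁Icc : r₁ ∈ Set.Icc (0:ℝ) 1 := ⟨by linarith, by linarith⟩
  refine ⟨r₁, ⟨⟨by linarith, by linarith⟩, by unfold kfun at hr₁; linarith⟩, ?_, h39, h392⟩
  intro r hr hreq
  have hrIcc : r ∈ Set.Icc (0:ℝ) 1 := ⟨hr.1.le, hr.2.le⟩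
  have hkr : kfun r = 0 := by unfold kfun; linarith
  rcases lt_trichotomy r r₁ with h | h | h
  · have := kfun_anti r hrIcc r₁ hr₁Icc h; rw [hkr, hr₁] at this; linarith
  · exact h
  · have := kfun_anti r₁ hr₁Icc r hrIcc h; rw [hkr, hr₁] at this; linarith
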